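/- For every forest P on {1,…,n}, the leaf ideal I_L(P) ⊆ k[x_1,…,x_n] is a series-parallel ideal up to relabeling of the variables: there is a permutation π of {1,…,n} such that the image of I_L(P) under the ring isomorphism sending x_i to x_{π(i)} is a series-parallel ideal. -/

import Mathlib

open MvPolynomial

/-- The squarefree monomial with support `s`: `∏_{j ∈ s} x_j`. -/
noncomputable def sfMon (𝕜 : Type) [Field 𝕜] {σ : Type} (s : Finset σ) : MvPolynomial σ 𝕜 :=
  ∏ j ∈ s, X j

/-- The supports of the minimal monomial generating set `G(I)` of a squarefree monomial
ideal `I`: supports `s` of squarefree monomials in `I` no proper (squarefree) divisor of which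
lies in `I`. -/
def sqfreeMinGens {𝕜 : Type} [Field 𝕜] {σ : Type} (I : Ideal (MvPolynomial σ 𝕜)) :
    Set (Finset σ) :=
  { s | sfMon 𝕜 s ∈ I ∧ ∀ t : Finset σ, t ⊂ s → sfMon 𝕜 t ∉ I }

/-- `C_i(I) = ⋂ { supp m : m ∈ G(I), x_i ∣ m }`. -/
def suppC {𝕜 : Type} [Field 𝕜] {σ : Type} (I : Ideal (MvPolynomial σ 𝕜)) (i : σ) : Set σ :=
  ⋂ s ∈ { s | s ∈ sqfreeMinGens I ∧ i ∈ s }, (s : Set σ)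


open Classical

/-- A partial order `P` on `α` is a forest if, for every `p`, the set of elements strictly
below `p` is a chain. -/
def IsPForest {α : Type} (P : PartialOrder α) : Prop :=
  ∀ p q r : α, P.lt q p → P.lt r p → P.le q r ∨ P.le r q

/-- `l` is maximal (a leaf) for the partial order `P`. -/
def PIsMax {α : Type} (P : PartialOrder α) (l : α) : Prop := ∀ q, P.le l q → q = l

/-- `r` is minimal (a root) for the partial order `P`. -/
def PIsMin {α : Type} (P : PartialOrder α) (r : α) : Prop := ∀ q, P.le q r → q = r

/-- `q` is a child of `p`: `q` covers `p` in `P`. -/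
def PChild {α : Type} (P : PartialOrder α) (p q : α) : Prop :=
  P.lt p q ∧ ∀ r, P.lt p r → ¬ P.lt r q

/-- The leaf ideal of a forest `P` on `{1,…,n}`:
`I_L(P) = ⟨ ∏_{j ≤_P l} x_j : l a leaf of P ⟩`. -/
noncomputable def leafIdeal (𝕜 : Type) [Field 𝕜] {n : ℕ} (P : PartialOrder (Fin n)) :
    Ideal (MvPolynomial (Fin n) 𝕜) :=
  Ideal.span { f | ∃ l : Fin n, PIsMax P l ∧
    f = sfMon 𝕜 (Finset.univ.filter (fun j => P.le j l)) }

/-- Series-parallel ideals, defined inductively: `⟨x_1⟩ ⊆ 𝕜[x_1]` is series-parallel, and if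
`I₁ ⊆ 𝕜[x_1,…,x_n]` and `I₂ ⊆ 𝕜[x_{n+1},…,x_{n+m}]` are series-parallel then so are
`I₁' + I₂'` and `I₁' ∩ I₂'` in `𝕜[x_1,…,x_{n+m}]`, where `I₁'`, `I₂'` are the extensions
along the inclusions of polynomial rings (renaming along `Fin.castAdd` and `Fin.natAdd`). -/
inductive IsSeriesParallel (𝕜 : Type) [Field 𝕜] :
    (n : ℕ) → Ideal (MvPolynomial (Fin n) 𝕜) → Prop
  | basic : IsSeriesParallel 𝕜 1 (Ideal.span {MvPolynomial.X 0})
  | sum {n m : ℕ} {I₁ : Ideal (MvPolynomial (Fin n) 𝕜)} {I₂ : Ideal (MvPolynomial (Fin m) 𝕜)} :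
      IsSeriesParallel 𝕜 n I₁ → IsSeriesParallel 𝕜 m I₂ →
      IsSeriesParallel 𝕜 (n + m)
        (Ideal.map (MvPolynomial.rename (Fin.castAdd m)).toRingHom I₁ ⊔
         Ideal.map (MvPolynomial.rename (Fin.natAdd n)).toRingHom I₂)
  | inter {n m : ℕ} {I₁ : Ideal (MvPolynomial (Fin n) 𝕜)} {I₂ : Ideal (MvPolynomial (Fin m) 𝕜)} :
      IsSeriesParallel 𝕜 n I₁ → IsSeriesParallel 𝕜 m I₂ →
      IsSeriesParallel 𝕜 (n + m)
        (Ideal.map (MvPolynomial.rename (Fin.castAdd m)).toRingHom I₁ ⊓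
         Ideal.map (MvPolynomial.rename (Fin.natAdd n)).toRingHom I₂)


section AuxSP

open MvPolynomial Classical

variable {𝕜 : Type} [Field 𝕜] {σ τ : Type}

/-- indicator finsupp of a finset -/
noncomputable def indF {σ : Type} (s : Finset σ) : σ →₀ ℕ := ∑ j ∈ s, Finsupp.single j 1

lemma indF_apply (s : Finset σ) (k : σ) : indF s k = if k ∈ s then 1 else 0 := by
  classical
  simp [indF, Finsupp.finset_sum_apply, Finsupp.single_apply]

lemma indF_le_iff {s : Finset σ} {d : σ →₀ ℕ} : indF s ≤ d ↔ ∀ j ∈ s, 1 ≤ d j := by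
  classical
  rw [Finsupp.le_def]
  constructor
  · intro h j hj
    have := h j
    rwa [indF_apply, if_pos hj] at this
  · intro h k
    rw [indF_apply]
    split
    · exact h _ ‹_›
    · exact Nat.zero_le _

lemma indF_mono {s t : Finset σ} (h : s ⊆ t) : indF s ≤ indF t := by
  classical
  rw [indF_le_iff]
  intro j hj
  rw [indF_apply, if_pos (h hj)]

lemma sfMon_monomial (s : Finset σ) : sfMon 𝕜 s = monomial (indF s) 1 := by
  classical
  induction s using Finset.induction_on with
  | empty => simp [sfMon, indF]
  | @insert a s ha ih =>
    simp only [sfMon, indF, Finset.prod_insert ha, Finset.sum_insert ha] at ih ⊢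
    rw [ih, X, monomial_mul, one_mul]

lemma mem_span_sfMon {S : Set (Finset σ)} {f : MvPolynomial σ 𝕜} :
    f ∈ Ideal.span ((fun s => sfMon 𝕜 s) '' S) ↔
      ∀ d ∈ f.support, ∃ s ∈ S, indF s ≤ d := by
  have h : ((fun s => sfMon 𝕜 s) '' S) = ((fun d => (monomial d (1:𝕜))) '' (indF '' S)) := by
    rw [Set.image_image]
    exact Set.image_congr fun s _ => sfMon_monomial s
  rw [h, mem_ideal_span_monomial_image]
  simp

lemma sfMon_singleton (i : σ) : sfMon 𝕜 {i} = X i := by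
  simp [sfMon]

lemma span_sfMon_insert [DecidableEq σ] (i : σ) (S : Set (Finset σ)) :
    Ideal.span ((fun s => sfMon 𝕜 (insert i s)) '' S) =
      Ideal.span {(X i : MvPolynomial σ 𝕜)} ⊓ Ideal.span ((fun s => sfMon 𝕜 s) '' S) := by
  classical
  have h1 : ({(X i : MvPolynomial σ 𝕜)} : Set (MvPolynomial σ 𝕜))
      = (fun s => sfMon 𝕜 s) '' {({i} : Finset σ)} := by
    simp [sfMon_singleton]
  have h2 : ((fun s => sfMon 𝕜 (insert i s)) '' S)
      = (fun s => sfMon 𝕜 s) '' ((fun s => insert i s) '' S) := by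
    rw [Set.image_image]
  rw [h1, h2]
  ext f
  simp only [Ideal.mem_inf, mem_span_sfMon, Set.mem_image, Set.mem_singleton_iff,
    exists_exists_and_eq_and, exists_eq_left]
  constructor
  · intro h
    refine ⟨fun d hd => ?_, fun d hd => ?_⟩
    · obtain ⟨t, _, hle⟩ := h d hd
      exact le_trans (indF_mono (by simp)) hle
    · obtain ⟨t, ht, hle⟩ := h d hd
      exact ⟨t, ht, le_trans (indF_mono (Finset.subset_insert i t)) hle⟩
  · rintro ⟨ha, hb⟩ d hd
    obtain ⟨t, ht, hle⟩ := hb d hd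
    refine ⟨t, ht, indF_le_iff.2 ?_⟩
    intro j hj
    rcases Finset.mem_insert.1 hj with rfl | hj
    · exact indF_le_iff.1 (ha d hd) j (Finset.mem_singleton_self j)
    · exact indF_le_iff.1 hle j hj

lemma rename_sfMon [DecidableEq τ] (g : σ → τ) (hg : Function.Injective g) (s : Finset σ) :
    rename g (sfMon 𝕜 s) = sfMon 𝕜 (s.image g) := by
  classical
  rw [sfMon, map_prod, sfMon, Finset.prod_image (fun a _ b _ h => hg h)]
  simp [rename_X]

end AuxSP

section MainSP

open MvPolynomial Classical

/-- The set of supports of the generators of the leaf ideal. -/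
def LSet {α : Type} [Fintype α] (P : PartialOrder α) : Set (Finset α) :=
  {s | ∃ l, PIsMax P l ∧ s = Finset.univ.filter fun j => P.le j l}

lemma forest_lift {α : Type} [P : PartialOrder α] (hf : IsPForest P) (pr : α → Prop) :
    IsPForest (PartialOrder.lift (Subtype.val : {a // pr a} → α) Subtype.val_injective) := by
  intro p q s hq hs
  exact hf p.val q.val s.val hq hs

lemma leafIdeal_eq_span {𝕜 : Type} [Field 𝕜] {n : ℕ} (P : PartialOrder (Fin n)) :
    leafIdeal 𝕜 P = Ideal.span ((fun s => sfMon 𝕜 s) '' LSet P) := by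
  unfold leafIdeal
  congr 1
  ext f
  simp only [Set.mem_setOf_eq, Set.mem_image, LSet]
  constructor
  · rintro ⟨l, hl, rfl⟩; exact ⟨_, ⟨l, hl, rfl⟩, rfl⟩
  · rintro ⟨s, ⟨l, hl, rfl⟩, rfl⟩; exact ⟨l, hl, rfl⟩

lemma natAdd_inj {n m : ℕ} : Function.Injective (Fin.natAdd n : Fin m → Fin (n + m)) := by
  intro a b hab
  have := congrArg Fin.val hab
  simp only [Fin.coe_natAdd] at this
  exact Fin.ext (by omega)

lemma spMain {𝕜 : Type} [Field 𝕜] :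
    ∀ (N : ℕ) (α : Type) [Fintype α], Fintype.card α ≤ N → Nonempty α →
      ∀ (P : PartialOrder α), IsPForest P →
      ∃ (m : ℕ) (e : α ≃ Fin m), IsSeriesParallel 𝕜 m
        (Ideal.span ((fun s => sfMon 𝕜 (s.image e)) '' LSet P)) := by
  intro N
  induction N with
  | zero =>
    intro α _ hcard hne P _
    exfalso
    have := Fintype.card_pos_iff.mpr hne
    omega
  | succ N ih =>
    intro α inst hcard hne P hforest
    classical
    letI := P
    haveI : Nonempty α := hne
    obtain ⟨r, -, hrmin⟩ : ∃ m ∈ (Finset.univ : Finset α), ∀ x ∈ (Finset.univ : Finset α), ¬ x < m := by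
      obtain ⟨m, -, hm⟩ := exists_minimal_of_wellFoundedLT (fun _ : α => True) ⟨Classical.arbitrary α, trivial⟩
      exact ⟨m, Finset.mem_univ m, fun x _ hx => (not_le_of_gt hx) (hm trivial hx.le)⟩
    by_cases hbot : ∀ p : α, P.le r p
    · by_cases hone : ∀ p : α, p = r
      · -- single element: base case
        let e : α ≃ Fin 1 :=
          ⟨fun _ => 0, fun _ => r, fun a => (hone a).symm, fun i => Subsingleton.elim _ _⟩
        refine ⟨1, e, ?_⟩
        have hset : ((fun s => sfMon 𝕜 (s.image e)) '' LSet P) = {X 0} := by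
          have himg : ∀ l : α, (Finset.univ.filter fun j => P.le j l).image e = {(0 : Fin 1)} := by
            intro l
            apply Finset.ext
            intro y
            simp only [Finset.mem_image, Finset.mem_filter, Finset.mem_univ, true_and,
              Finset.mem_singleton]
            constructor
            · rintro ⟨a, -, rfl⟩; exact Subsingleton.elim _ _
            · rintro rfl; exact ⟨l, P.le_refl l, Subsingleton.elim _ _⟩
          ext f
          simp only [Set.mem_image, LSet, Set.mem_setOf_eq, Set.mem_singleton_iff]
          constructor
          · rintro ⟨s, ⟨l, hl, rfl⟩, rfl⟩
            rw [himg l, sfMon_singleton]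
          · rintro rfl
            exact ⟨Finset.univ.filter fun j => P.le j r, ⟨r, fun q _ => hone q, rfl⟩,
              by rw [himg r, sfMon_singleton]⟩
        rw [hset]
        exact IsSeriesParallel.basic
      · -- r is a bottom element, at least two elements: intersection case
        push_neg at hone
        obtain ⟨p₀, hp₀⟩ := hone
        let β := {a : α // ¬ a = r}
        let P' : PartialOrder β := PartialOrder.lift Subtype.val Subtype.val_injective
        have hcardβ : Fintype.card β ≤ N := by
          have h1 : Fintype.card β < Fintype.card α :=
            Fintype.card_subtype_lt (x := r) (by simp)
          omega
        obtain ⟨m, e₂, hSP⟩ := ih β hcardβ ⟨⟨p₀, hp₀⟩⟩ P' (forest_lift hforest _)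
        let e₁ : {a : α // a = r} ≃ Fin 1 :=
          ⟨fun _ => 0, fun _ => ⟨r, rfl⟩, fun x => Subtype.ext x.2.symm,
            fun i => Subsingleton.elim _ _⟩
        let e : α ≃ Fin (1 + m) :=
          (Equiv.sumCompl (fun a => a = r)).symm.trans ((e₁.sumCongr e₂).trans finSumFinEquiv)
        have he_r : e r = Fin.castAdd m 0 := by
          simp only [e, Equiv.trans_apply, Equiv.sumCompl_symm_apply_of_pos (p := fun a => a = r) (a := r) rfl,
            Equiv.sumCongr_apply, Sum.map_inl, finSumFinEquiv_apply_left]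
          rfl
        have he_ne : ∀ (a : α) (ha : ¬ a = r), e a = Fin.natAdd 1 (e₂ ⟨a, ha⟩) := by
          intro a ha
          simp only [e, Equiv.trans_apply, Equiv.sumCompl_symm_apply_of_neg (p := fun a => a = r) (a := a) ha,
            Equiv.sumCongr_apply, Sum.map_inr, finSumFinEquiv_apply_right]
        have hrnotleaf : ¬ PIsMax P r := fun h => hp₀ (h p₀ (hbot p₀))
        have hset : ((fun s => sfMon 𝕜 (s.image e)) '' LSet P)
            = (fun t : Finset β =>
                sfMon 𝕜 (insert (Fin.castAdd m 0) (t.image fun b => Fin.natAdd 1 (e₂ b)))) ''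
                LSet P' := by
          have hfilt : ∀ (l : α) (hl : ¬ l = r),
              (Finset.univ.filter fun j => P.le j l).image e
              = insert (Fin.castAdd m 0)
                  ((Finset.univ.filter fun j => P'.le j ⟨l, hl⟩).image
                    fun b => Fin.natAdd 1 (e₂ b)) := by
            intro l hl
            apply Finset.ext
            intro y
            simp only [Finset.mem_image, Finset.mem_filter, Finset.mem_univ, true_and,
              Finset.mem_insert]
            constructor
            · rintro ⟨a, hal, rfl⟩
              by_cases ha : a = r
              · subst ha; exact Or.inl he_r
              · exact Or.inr ⟨⟨a, ha⟩, hal, (he_ne a ha).symm⟩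
            · rintro (rfl | ⟨b, hbl, rfl⟩)
              · exact ⟨r, hbot l, he_r⟩
              · exact ⟨b.val, hbl, he_ne b.val b.2⟩
          ext f
          simp only [Set.mem_image, LSet, Set.mem_setOf_eq]
          constructor
          · rintro ⟨s, ⟨l, hl, rfl⟩, rfl⟩
            have hlr : ¬ l = r := fun h => hrnotleaf (h ▸ hl)
            refine ⟨Finset.univ.filter fun j => P'.le j ⟨l, hlr⟩, ⟨⟨l, hlr⟩, ?_, rfl⟩, ?_⟩
            · intro q hq
              exact Subtype.ext (hl q.val hq)
            · rw [hfilt l hlr]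
          · rintro ⟨t, ⟨l', hl', rfl⟩, rfl⟩
            refine ⟨Finset.univ.filter fun j => P.le j l'.val, ⟨l'.val, ?_, rfl⟩, ?_⟩
            · intro q hq
              by_cases hq' : q = r
              · rw [hq'] at hq
                exact absurd (P.le_antisymm l'.val r hq (hbot l'.val)) l'.2
              · exact congrArg Subtype.val (hl' ⟨q, hq'⟩ hq)
            · rw [hfilt l'.val l'.2]
        have hX : (Ideal.span {(X (Fin.castAdd m 0) : MvPolynomial (Fin (1+m)) 𝕜)})
            = Ideal.map (rename (Fin.castAdd m)).toRingHom
                (Ideal.span {(X 0 : MvPolynomial (Fin 1) 𝕜)}) := by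
          rw [Ideal.map_span, Set.image_singleton]
          simp
        have hJ : Ideal.span ((fun s => sfMon 𝕜 s) ''
              ((fun t : Finset β => t.image fun b => Fin.natAdd 1 (e₂ b)) '' LSet P'))
            = Ideal.map (rename (Fin.natAdd 1)).toRingHom
                (Ideal.span ((fun s => sfMon 𝕜 (s.image e₂)) '' LSet P')) := by
          rw [Ideal.map_span, Set.image_image, Set.image_image]
          congr 1
          apply Set.image_congr
          intro t _
          have h3 : (t.image fun b => Fin.natAdd 1 (e₂ b)) = (t.image e₂).image (Fin.natAdd 1) := by
            rw [Finset.image_image]; rfl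
          rw [h3, ← rename_sfMon _ natAdd_inj]
          simp
        refine ⟨1 + m, e, ?_⟩
        rw [hset]
        have hset2 : ((fun t : Finset β =>
                sfMon 𝕜 (insert (Fin.castAdd m 0) (t.image fun b => Fin.natAdd 1 (e₂ b)))) ''
                LSet P')
            = (fun s => sfMon 𝕜 (insert (Fin.castAdd m 0) s)) ''
                ((fun t : Finset β => t.image fun b => Fin.natAdd 1 (e₂ b)) '' LSet P') := by
          rw [Set.image_image]
        rw [hset2, span_sfMon_insert, hX, hJ]
        exact IsSeriesParallel.inter IsSeriesParallel.basic hSP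
    · -- not a bottom: split off the up-set of r
      push_neg at hbot
      obtain ⟨p₀, hp₀⟩ := hbot
      have hcross : ∀ (a b : α), P.le r a → ¬ P.le r b → ¬ P.le a b ∧ ¬ P.le b a := by
        intro a b hra hrb
        have hbr : ¬ b = r := fun h => hrb (h ▸ P.le_refl r)
        constructor
        · exact fun hab => hrb (P.le_trans _ _ _ hra hab)
        · intro hba
          by_cases hab : b = a
          · exact hrb (hab ▸ hra)
          have hltba : P.lt b a :=
            (P.lt_iff_le_not_ge b a).2 ⟨hba, fun h => hab (P.le_antisymm b a hba h)⟩
          by_cases hra' : r = a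
          · exact hrmin b (Finset.mem_univ b) (by rw [hra']; exact hltba)
          · have hltra : P.lt r a :=
              (P.lt_iff_le_not_ge r a).2 ⟨hra, fun h => hra' (P.le_antisymm r a hra h)⟩
            rcases hforest a b r hltba hltra with h | h
            · exact hrmin b (Finset.mem_univ b)
                ((P.lt_iff_le_not_ge b r).2 ⟨h, fun h' => hbr (P.le_antisymm b r h h')⟩)
            · exact hrb h
      let A := {a : α // P.le r a}
      let B := {a : α // ¬ P.le r a}
      let PA : PartialOrder A := PartialOrder.lift Subtype.val Subtype.val_injective
      let PB : PartialOrder B := PartialOrder.lift Subtype.val Subtype.val_injective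
      have hcardA : Fintype.card A ≤ N := by
        have h1 : Fintype.card A < Fintype.card α := Fintype.card_subtype_lt (x := p₀) hp₀
        omega
      have hcardB : Fintype.card B ≤ N := by
        have h1 : Fintype.card B < Fintype.card α :=
          Fintype.card_subtype_lt (x := r) (by simp [P.le_refl])
        omega
      obtain ⟨m₁, e₁, hSP₁⟩ := ih A hcardA ⟨⟨r, P.le_refl r⟩⟩ PA (forest_lift hforest _)
      obtain ⟨m₂, e₂, hSP₂⟩ := ih B hcardB ⟨⟨p₀, hp₀⟩⟩ PB (forest_lift hforest _)
      let e : α ≃ Fin (m₁ + m₂) :=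
        (Equiv.sumCompl (fun a => P.le r a)).symm.trans ((e₁.sumCongr e₂).trans finSumFinEquiv)
      have he_pos : ∀ (a : α) (h : P.le r a), e a = Fin.castAdd m₂ (e₁ ⟨a, h⟩) := by
        intro a h
        simp only [e, Equiv.trans_apply, Equiv.sumCompl_symm_apply_of_pos (p := fun a => P.le r a) (a := a) h,
          Equiv.sumCongr_apply, Sum.map_inl, finSumFinEquiv_apply_left]
      have he_neg : ∀ (a : α) (h : ¬ P.le r a), e a = Fin.natAdd m₁ (e₂ ⟨a, h⟩) := by
        intro a h
        simp only [e, Equiv.trans_apply, Equiv.sumCompl_symm_apply_of_neg (p := fun a => P.le r a) (a := a) h,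
          Equiv.sumCongr_apply, Sum.map_inr, finSumFinEquiv_apply_right]
      have hset : ((fun s => sfMon 𝕜 (s.image e)) '' LSet P)
          = ((fun t : Finset A => sfMon 𝕜 (t.image fun b => Fin.castAdd m₂ (e₁ b))) '' LSet PA)
            ∪ ((fun t : Finset B => sfMon 𝕜 (t.image fun b => Fin.natAdd m₁ (e₂ b))) '' LSet PB) := by
        have hfiltA : ∀ (l : α) (hl : P.le r l),
            (Finset.univ.filter fun j => P.le j l).image e
            = (Finset.univ.filter fun j => PA.le j ⟨l, hl⟩).image
                fun b => Fin.castAdd m₂ (e₁ b) := by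
          intro l hl
          apply Finset.ext
          intro y
          simp only [Finset.mem_image, Finset.mem_filter, Finset.mem_univ, true_and]
          constructor
          · rintro ⟨a, hal, rfl⟩
            have ha : P.le r a := by
              by_contra hna
              exact (hcross l a hl hna).2 hal
            exact ⟨⟨a, ha⟩, hal, (he_pos a ha).symm⟩
          · rintro ⟨b, hbl, rfl⟩
            exact ⟨b.val, hbl, he_pos b.val b.2⟩
        have hfiltB : ∀ (l : α) (hl : ¬ P.le r l),
            (Finset.univ.filter fun j => P.le j l).image e
            = (Finset.univ.filter fun j => PB.le j ⟨l, hl⟩).image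
                fun b => Fin.natAdd m₁ (e₂ b) := by
          intro l hl
          apply Finset.ext
          intro y
          simp only [Finset.mem_image, Finset.mem_filter, Finset.mem_univ, true_and]
          constructor
          · rintro ⟨a, hal, rfl⟩
            have ha : ¬ P.le r a := by
              intro hra
              exact (hcross a l hra hl).1 hal
            exact ⟨⟨a, ha⟩, hal, (he_neg a ha).symm⟩
          · rintro ⟨b, hbl, rfl⟩
            exact ⟨b.val, hbl, he_neg b.val b.2⟩
        ext f
        simp only [Set.mem_image, LSet, Set.mem_setOf_eq, Set.mem_union]
        constructor
        · rintro ⟨s, ⟨l, hl, rfl⟩, rfl⟩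
          by_cases hrl : P.le r l
          · left
            refine ⟨Finset.univ.filter fun j => PA.le j ⟨l, hrl⟩, ⟨⟨l, hrl⟩, ?_, rfl⟩, ?_⟩
            · intro q hq
              exact Subtype.ext (hl q.val hq)
            · rw [hfiltA l hrl]
          · right
            refine ⟨Finset.univ.filter fun j => PB.le j ⟨l, hrl⟩, ⟨⟨l, hrl⟩, ?_, rfl⟩, ?_⟩
            · intro q hq
              exact Subtype.ext (hl q.val hq)
            · rw [hfiltB l hrl]
        · rintro (⟨t, ⟨l', hl', rfl⟩, rfl⟩ | ⟨t, ⟨l', hl', rfl⟩, rfl⟩)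
          · refine ⟨Finset.univ.filter fun j => P.le j l'.val, ⟨l'.val, ?_, rfl⟩, ?_⟩
            · intro q hq
              have hq' : P.le r q := P.le_trans _ _ _ l'.2 hq
              exact congrArg Subtype.val (hl' ⟨q, hq'⟩ hq)
            · rw [hfiltA l'.val l'.2]
          · refine ⟨Finset.univ.filter fun j => P.le j l'.val, ⟨l'.val, ?_, rfl⟩, ?_⟩
            · intro q hq
              have hq' : ¬ P.le r q := fun h => (hcross q l'.val h l'.2).2 hq
              exact congrArg Subtype.val (hl' ⟨q, hq'⟩ hq)
            · rw [hfiltB l'.val l'.2]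
      refine ⟨m₁ + m₂, e, ?_⟩
      rw [hset, Ideal.span_union]
      have hJ1 : Ideal.span
            ((fun t : Finset A => sfMon 𝕜 (t.image fun b => Fin.castAdd m₂ (e₁ b))) '' LSet PA)
          = Ideal.map (rename (Fin.castAdd m₂)).toRingHom
              (Ideal.span ((fun s => sfMon 𝕜 (s.image e₁)) '' LSet PA)) := by
        rw [Ideal.map_span, Set.image_image]
        congr 1
        apply Set.image_congr
        intro t _
        have h3 : (t.image fun b => Fin.castAdd m₂ (e₁ b))
            = (t.image e₁).image (Fin.castAdd m₂) := by
          rw [Finset.image_image]; rfl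
        rw [h3, ← rename_sfMon _ (Fin.castAdd_injective _ _)]
        simp
      have hJ2 : Ideal.span
            ((fun t : Finset B => sfMon 𝕜 (t.image fun b => Fin.natAdd m₁ (e₂ b))) '' LSet PB)
          = Ideal.map (rename (Fin.natAdd m₁)).toRingHom
              (Ideal.span ((fun s => sfMon 𝕜 (s.image e₂)) '' LSet PB)) := by
        rw [Ideal.map_span, Set.image_image]
        congr 1
        apply Set.image_congr
        intro t _
        have h3 : (t.image fun b => Fin.natAdd m₁ (e₂ b))
            = (t.image e₂).image (Fin.natAdd m₁) := by
          rw [Finset.image_image]; rfl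
        rw [h3, ← rename_sfMon _ natAdd_inj]
        simp
      rw [hJ1, hJ2]
      exact IsSeriesParallel.sum hSP₁ hSP₂

end MainSP


/-- For every (nonempty) forest `P` on `{1,…,n}`, the leaf ideal `I_L(P)` is a
series-parallel ideal up to relabeling of the variables: there is a permutation `π` of the
variable indices such that the image of `I_L(P)` under the ring isomorphism `x_i ↦ x_{π i}`
is a series-parallel ideal. -/
theorem stmt16 {𝕜 : Type} [Field 𝕜] (n : ℕ) (hn : 1 ≤ n) (P : PartialOrder (Fin n))
    (hforest : IsPForest P) :
    ∃ π : Equiv.Perm (Fin n),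
      IsSeriesParallel 𝕜 n
        (Ideal.map (MvPolynomial.rename (π : Fin n → Fin n)).toRingHom (leafIdeal 𝕜 P)) := by
  classical
  obtain ⟨m, e, hSP⟩ := spMain (𝕜 := 𝕜) n (Fin n) (le_of_eq (Fintype.card_fin n))
    ⟨⟨0, hn⟩⟩ P hforest
  have hnm : n = m := Fin.equiv_iff_eq.mp ⟨e⟩
  subst hnm
  refine ⟨e, ?_⟩
  rw [leafIdeal_eq_span, Ideal.map_span]
  have himg : (⇑(rename (⇑e : Fin n → Fin n)).toRingHom '' ((fun s => sfMon 𝕜 s) '' LSet P))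
      = ((fun s => sfMon 𝕜 (s.image e)) '' LSet P) := by
    rw [Set.image_image]
    apply Set.image_congr
    intro s _
    simpa using rename_sfMon (⇑e : Fin n → Fin n) e.injective s
  rw [himg]
  exact hSP
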